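/- The flow equations of the Sol special case A = C with α' ≠ 0, namely A' = -32α'A/B² and B' = 8 - 32α'/B, admit the conserved quantity A(1 - 4α'/B): its time derivative along any solution with B > 0, B ≠ 4α' is zero. -/

import Mathlib

theorem sol_special_conserved (α' : ℝ) (A B : ℝ → ℝ)
    (hApos : ∀ t, 0 < A t) (hBpos : ∀ t, 0 < B t) (hBne : ∀ t, B t ≠ 4*α')
    (hA : ∀ t, HasDerivAt A (-32*α'*(A t)/(B t)^2) t)
    (hB : ∀ t, HasDerivAt B (8 - 32*α'/(B t)) t) :
    ∀ t, HasDerivAt (fun s => A s * (1 - 4*α'/(B s))) 0 t := by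
  intro t
  have hBne0 : B t ≠ 0 := ne_of_gt (hBpos t)
  have hinv : HasDerivAt (fun s => 1 - 4*α'/(B s))
      (-(4*α' * (-(8 - 32*α'/(B t)) / (B t)^2))) t := by
    have := (((hB t).inv hBne0).const_mul (4*α')).const_sub 1
    simpa [div_eq_mul_inv, mul_comm, mul_assoc, mul_left_comm] using this
  have h : HasDerivAt (fun s => A s * (1 - 4*α'/(B s))) _ t := (hA t).mul hinv
  convert h using 1
  field_simp
  ring
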